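/- For sl_2, the Laurent polynomial m_{k,a}(1 + A_{aq}^{-1})(1 + A_{aq^3}^{-1})···(1 + A_{aq^{2k-1}}^{-1}) (the q-character of the tensor product L(Y_a) ⊗ L(Y_{aq^2}) ⊗ ··· ⊗ L(Y_{aq^{2(k-1)}})) has exactly 2^k monomials, all distinct and each with coefficient 1. -/

import Mathlib

noncomputable section

/-- Laurent monomials in the variables `Y_b`, `b ∈ ℂˣ`, written additively:
a monomial is its finitely supported exponent function. -/
abbrev Mon : Type := ℂˣ →₀ ℤ

/-- The Laurent polynomial ring `ℤ[Y_b^±]`. -/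
abbrev Rng : Type := AddMonoidAlgebra ℤ Mon

/-- The variable `Y_b` as a monomial. -/
def Y (b : ℂˣ) : Mon := Finsupp.single b 1

/-- A monomial viewed as an element of the Laurent polynomial ring. -/
def X (m : Mon) : Rng := AddMonoidAlgebra.single m 1

/-- The monomial `A_b = Y_{bq⁻¹} Y_{bq}` (sl₂ case). -/
def Amon (q b : ℂˣ) : Mon := Y (b * q⁻¹) + Y (b * q)

/-- The highest weight monomial `m_{k,a} = Y_a Y_{aq²} ⋯ Y_{aq^{2(k-1)}}`. -/
def mka (q : ℂˣ) (k : ℕ) (a : ℂˣ) : Mon := ∑ s ∈ Finset.range k, Y (a * q ^ (2 * s))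

/-- The normalized q-character of the sl₂ Kirillov-Reshetikhin module, given by the
nested formula `1 + A_{aq^{2k-1}}⁻¹(1 + A_{aq^{2k-3}}⁻¹(1 + ⋯ (1 + A_{aq}⁻¹)⋯))`. -/
def Nchi (q : ℂˣ) : ℕ → ℂˣ → Rng
  | 0, _ => 1
  | (k+1), a => 1 + X (-(Amon q (a * q ^ (2 * k + 1)))) * Nchi q k a

/-- The q-character `χ_q(W_{k,a}) = m_{k,a}(1 + A_{aq^{2k-1}}⁻¹(1 + ⋯ (1 + A_{aq}⁻¹)⋯))`. -/
def chiW (q : ℂˣ) (k : ℕ) (a : ℂˣ) : Rng := X (mka q k a) * Nchi q k a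

/-- A monomial `m ≠ 1` is right-negative if for each `a`, at the maximal `q`-power shift
`L` where `m` is supported on `a q^L`, the exponent is negative. -/
def RightNeg (q : ℂˣ) (m : Mon) : Prop :=
  m ≠ 0 ∧ ∀ (a : ℂˣ) (L : ℤ), m (a * q ^ L) ≠ 0 →
    (∀ l : ℤ, L < l → m (a * q ^ l) = 0) → m (a * q ^ L) < 0

/-- A monomial is dominant if all its exponents are nonnegative. -/
def Dominant (m : Mon) : Prop := ∀ b, 0 ≤ m b

/-- for sl₂, the Laurent polynomial
`m_{k,a}(1+A_{aq}⁻¹)(1+A_{aq³}⁻¹)⋯(1+A_{aq^{2k-1}}⁻¹)` has exactly `2^k` monomials,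
all distinct and each with coefficient `1`. -/
lemma X_mul_apply (c : Mon) (f : Rng) (y : Mon) : (X c * f).coeff y = f.coeff (y - c) := by
  rw [X, AddMonoidAlgebra.coeff_single_mul_apply, one_mul, sub_eq_neg_add]

lemma X_mul_mem (c : Mon) (f : Rng) (y : Mon) :
    y ∈ (X c * f).coeff.support ↔ y - c ∈ f.coeff.support := by
  simp [Finsupp.mem_support_iff, X_mul_apply]

lemma X_mul_card (c : Mon) (f : Rng) : (X c * f).coeff.support.card = f.coeff.support.card := by
  apply Finset.card_bij' (fun m _ => m - c) (fun m _ => m + c)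
  · intro m hm; rwa [X_mul_mem] at hm
  · intro m hm; rw [X_mul_mem]; simpa using hm
  · intro m hm; abel
  · intro m hm; abel

lemma X_mul_X (c d : Mon) : X c * X d = X (c + d) := by
  simp [X, AddMonoidAlgebra.single_mul_single]

theorem kr_sl2_tensor_product (q : ℂˣ) (hq : ∀ n : ℤ, n ≠ 0 → q ^ n ≠ 1) (k : ℕ) (a : ℂˣ) :
    (X (mka q k a) * ∏ s ∈ Finset.range k, (1 + X (-(Amon q (a * q ^ (2 * s + 1)))))).coeff.support.card
        = 2 ^ k ∧
      ∀ m ∈ (X (mka q k a) *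
          ∏ s ∈ Finset.range k, (1 + X (-(Amon q (a * q ^ (2 * s + 1)))))).coeff.support,
        (X (mka q k a) * ∏ s ∈ Finset.range k, (1 + X (-(Amon q (a * q ^ (2 * s + 1)))))).coeff m = 1 := by
  -- distinct powers
  have haq : ∀ i j : ℕ, i ≠ j → a * q ^ i ≠ a * q ^ j := by
    intro i j hij h
    have h2 : q ^ (i : ℤ) = q ^ (j : ℤ) := by
      simpa [zpow_natCast] using mul_left_cancel h
    have : q ^ ((i : ℤ) - j) = 1 := by
      rw [zpow_sub, h2, mul_inv_cancel]
    exact hq _ (sub_ne_zero.2 (by exact_mod_cast hij)) this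
  set F : ℕ → Rng := fun k =>
    X (mka q k a) * ∏ s ∈ Finset.range k, (1 + X (-(Amon q (a * q ^ (2 * s + 1))))) with hF
  suffices h : ∀ k, (F k).coeff.support.card = 2 ^ k ∧
      (∀ m ∈ (F k).coeff.support, (F k).coeff m = 1) ∧
      (∀ m ∈ (F k).coeff.support, ∀ n : ℕ, 2 * k + 1 ≤ n → m (a * q ^ n) = 0) by
    exact ⟨(h k).1, (h k).2.1⟩
  intro k
  induction k with
  | zero =>
    have : F 0 = X 0 := by
      simp [hF, mka, X]
    rw [this]
    refine ⟨?_, ?_, ?_⟩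
    · rw [X, AddMonoidAlgebra.coeff_single, Finsupp.support_single_ne_zero _ one_ne_zero]; simp
    · intro m hm
      rw [X, AddMonoidAlgebra.coeff_single, Finsupp.support_single_ne_zero _ one_ne_zero] at hm
      simp at hm; subst hm; simp [X]
    · intro m hm n _
      rw [X, AddMonoidAlgebra.coeff_single, Finsupp.support_single_ne_zero _ one_ne_zero] at hm
      simp at hm; subst hm; simp
  | succ k ih =>
    obtain ⟨ihc, ihv, ihz⟩ := ih
    -- rewrite F (k+1)
    have hmka : mka q (k+1) a = Y (a * q ^ (2 * k)) + mka q k a := by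
      rw [mka, Finset.sum_range_succ, mka]; abel
    have hA : Y (a * q ^ (2 * k)) - Amon q (a * q ^ (2 * k + 1)) = -(Y (a * q ^ (2 * k + 2))) := by
      have h1 : a * q ^ (2 * k + 1) * q⁻¹ = a * q ^ (2 * k) := by
        rw [pow_succ]; group
      have h2 : a * q ^ (2 * k + 1) * q = a * q ^ (2 * k + 2) := by
        rw [pow_succ]; group
      rw [Amon, h1, h2]; abel
    have hsplit : F (k+1) = X (Y (a * q ^ (2 * k))) * F k
        + X (-(Y (a * q ^ (2 * k + 2)))) * F k := by
      rw [hF]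
      dsimp only
      rw [Finset.prod_range_succ, hmka, ← X_mul_X, ← hA, sub_eq_add_neg, ← X_mul_X]
      ring
    set G := X (Y (a * q ^ (2 * k))) * F k with hG
    set H := X (-(Y (a * q ^ (2 * k + 2)))) * F k with hH
    -- values at a * q ^ (2k+2)
    have hne : (a * q ^ (2 * k) : ℂˣ) ≠ a * q ^ (2 * k + 2) := haq _ _ (by omega)
    have hGz : ∀ m ∈ G.coeff.support, m (a * q ^ (2 * k + 2)) = 0 := by
      intro m hm
      rw [hG, X_mul_mem] at hm
      have := ihz _ hm (2 * k + 2) (by omega)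
      have hy : (Y (a * q ^ (2 * k))) (a * q ^ (2 * k + 2)) = 0 := by
        rw [Y, Finsupp.single_apply, if_neg hne]
      have : m (a * q ^ (2 * k + 2)) - (Y (a * q ^ (2 * k))) (a * q ^ (2 * k + 2)) = 0 := by
        rw [← Finsupp.sub_apply] at *; exact this
      omega
    have hHz : ∀ m ∈ H.coeff.support, m (a * q ^ (2 * k + 2)) = -1 := by
      intro m hm
      rw [hH, X_mul_mem] at hm
      have h0 := ihz _ hm (2 * k + 2) (by omega)
      rw [Finsupp.sub_apply, Finsupp.neg_apply, Y, Finsupp.single_apply, if_pos rfl] at h0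
      omega
    have hdisj : Disjoint G.coeff.support H.coeff.support := by
      rw [Finset.disjoint_left]
      intro m hmG hmH
      have := hGz m hmG; have := hHz m hmH; omega
    have hsupp : (F (k+1)).coeff.support = G.coeff.support ∪ H.coeff.support := by
      rw [hsplit, AddMonoidAlgebra.coeff_add, Finsupp.support_add_eq hdisj]
    refine ⟨?_, ?_, ?_⟩
    · rw [hsupp, Finset.card_union_of_disjoint hdisj]
      have h1 : G.coeff.support.card = (F k).coeff.support.card := X_mul_card _ _
      have h2 : H.coeff.support.card = (F k).coeff.support.card := X_mul_card _ _
      rw [h1, h2, ihc]; ring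
    · intro m hm
      rw [hsplit, AddMonoidAlgebra.coeff_add, Finsupp.add_apply]
      rw [hsupp, Finset.mem_union] at hm
      rcases hm with hm | hm
      · have h1 : G.coeff m = 1 := by
          rw [hG, X_mul_apply]; exact ihv _ (by rwa [hG, X_mul_mem] at hm)
        have h2 : H.coeff m = 0 := by
          by_contra h
          exact (Finset.disjoint_left.1 hdisj hm) (Finsupp.mem_support_iff.2 h)
        rw [h1, h2, add_zero]
      · have h1 : H.coeff m = 1 := by
          rw [hH, X_mul_apply]; exact ihv _ (by rwa [hH, X_mul_mem] at hm)
        have h2 : G.coeff m = 0 := by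
          by_contra h
          exact (Finset.disjoint_right.1 hdisj hm) (Finsupp.mem_support_iff.2 h)
        rw [h1, h2, zero_add]
    · intro m hm n hn
      rw [hsupp, Finset.mem_union] at hm
      rcases hm with hm | hm
      · rw [hG, X_mul_mem] at hm
        have h0 := ihz _ hm n (by omega)
        have hy : (Y (a * q ^ (2 * k))) (a * q ^ n) = 0 := by
          rw [Y, Finsupp.single_apply, if_neg (fun h => haq n (2*k) (by omega) h.symm)]
        rw [Finsupp.sub_apply, hy, sub_zero] at h0; exact h0
      · rw [hH, X_mul_mem] at hm
        have h0 := ihz _ hm n (by omega)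
        have hy : (Y (a * q ^ (2 * k + 2))) (a * q ^ n) = 0 := by
          rw [Y, Finsupp.single_apply, if_neg (fun h => haq n (2*k+2) (by omega) h.symm)]
        rw [Finsupp.sub_apply, Finsupp.neg_apply, hy, neg_zero, sub_zero] at h0; exact h0
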